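/- arXiv:1002.0628 — 2 statements merged into one kernel-verified Lean document; each statement's English description precedes it below -/
import Mathlib

section
/- Let 𝒞 be a reduced (m,n,r)-scheme. If m < 2r, then n = 1. -/
open scoped Classical

namespace CCPaper

variable {V : Type*}

/-- The diagonal relation `Δ_X = {(x,x) : x ∈ X}` on a subset `X ⊆ V`. -/
def diag (X : Set V) : Set (V × V) := {p : V × V | p.1 ∈ X ∧ p.1 = p.2}

/-- The transpose `R^t = {(v,u) : (u,v) ∈ R}` of a relation. -/
def transp (R : Set (V × V)) : Set (V × V) := Prod.swap ⁻¹' R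

/-- The intersection number `|{w : (p.1,w) ∈ R, (w,p.2) ∈ S}|` at a pair `p`. -/
noncomputable def iNum (R S : Set (V × V)) (p : V × V) : ℕ :=
  Nat.card {w : V | (p.1, w) ∈ R ∧ (w, p.2) ∈ S}

/-- `ℛ` is a coherent configuration (scheme) on the finite set `V`:
(C1) `ℛ` consists of nonempty relations partitioning `V × V`;
(C2) the diagonal is a union of relations of `ℛ`;
(C3) `ℛ` is closed under transposition;
(C4) intersection numbers are constant on each relation of `ℛ`. -/
def IsCC [Fintype V] (ℛ : Set (Set (V × V))) : Prop :=
  (∀ R ∈ ℛ, R.Nonempty) ∧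
  (∀ p : V × V, ∃! R, R ∈ ℛ ∧ p ∈ R) ∧
  (∀ R ∈ ℛ, (∃ p ∈ R, p.1 = p.2) → ∀ p ∈ R, p.1 = p.2) ∧
  (∀ R ∈ ℛ, transp R ∈ ℛ) ∧
  (∀ R ∈ ℛ, ∀ S ∈ ℛ, ∀ T ∈ ℛ, ∀ p ∈ T, ∀ q ∈ T, iNum R S p = iNum R S q)

/-- A fiber of the configuration: a nonempty `X ⊆ V` with `Δ_X ∈ ℛ`. -/
def IsFiber [Fintype V] (ℛ : Set (Set (V × V))) (X : Set V) : Prop :=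
  X.Nonempty ∧ diag X ∈ ℛ

/-- `ℛ_{X,Y}`, the set of basis relations contained in `X × Y`. -/
def relsBtw [Fintype V] (ℛ : Set (Set (V × V))) (X Y : Set V) : Set (Set (V × V)) :=
  {R | R ∈ ℛ ∧ R ⊆ X ×ˢ Y}

/-- Out-degree `d_R = |R_out(x)|` (computed at a chosen point of `R`;
for a basis relation of a scheme this is independent of the point). -/
noncomputable def outDeg (R : Set (V × V)) : ℕ :=
  if h : R.Nonempty then Nat.card {y : V | (h.choose.1, y) ∈ R} else 0

/-- In-degree `e_R = |R_in(y)|` (computed at a chosen point of `R`). -/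
noncomputable def inDeg (R : Set (V × V)) : ℕ :=
  if h : R.Nonempty then Nat.card {x : V | (x, h.choose.2) ∈ R} else 0

/-- The structure constant `c_{RS}^T` (computed at a chosen pair of `T`). -/
noncomputable def sConst (R S T : Set (V × V)) : ℕ :=
  if h : T.Nonempty then iNum R S h.choose else 0

/-- The complex product `RS = {T ∈ ℛ : c_{RS}^T > 0}`. -/
def cProd [Fintype V] (ℛ : Set (Set (V × V))) (R S : Set (V × V)) : Set (Set (V × V)) :=
  {T | T ∈ ℛ ∧ 0 < sConst R S T}

/-- A relation is thin if `d_R = e_R = 1`. -/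
def IsThin (R : Set (V × V)) : Prop := outDeg R = 1 ∧ inDeg R = 1

/-- `ℛ` is `r`-balanced: `|ℛ_{X,Y}| = r` for all fibers `X, Y`. -/
def IsBalancedWith [Fintype V] (ℛ : Set (Set (V × V))) (r : ℕ) : Prop :=
  ∀ X Y : Set V, IsFiber ℛ X → IsFiber ℛ Y → Nat.card (relsBtw ℛ X Y) = r

/-- `ℛ` is balanced: `|ℛ_{X,Y}|` is the same for all pairs of fibers. -/
def IsBalanced [Fintype V] (ℛ : Set (Set (V × V))) : Prop := ∃ r : ℕ, IsBalancedWith ℛ r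

/-- An `(m,n,r)`-scheme: a coherent configuration which is `r`-balanced, all of whose
fibers have size `m`, and which has exactly `n` fibers. -/
def IsMNRScheme [Fintype V] (ℛ : Set (Set (V × V))) (m n r : ℕ) : Prop :=
  IsCC ℛ ∧ IsBalancedWith ℛ r ∧ (∀ X : Set V, IsFiber ℛ X → Nat.card X = m) ∧
    Nat.card {X : Set V | IsFiber ℛ X} = n

/-- A scheme is reduced if no basis relation between distinct fibers is thin. -/
def IsReduced [Fintype V] (ℛ : Set (Set (V × V))) : Prop :=
  ∀ X Y : Set V, IsFiber ℛ X → IsFiber ℛ Y → X ≠ Y → ∀ R ∈ relsBtw ℛ X Y, ¬ IsThin R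

/-- A (possibly empty) union of fibers. -/
def IsFiberUnion [Fintype V] (ℛ : Set (Set (V × V))) (U : Set V) : Prop :=
  ∃ F : Set (Set V), (∀ X ∈ F, IsFiber ℛ X) ∧ U = ⋃₀ F

/-- The adjacency matrix of a relation. -/
noncomputable def adjMat [Fintype V] (R : Set (V × V)) : Matrix V V ℂ :=
  fun u v => if (u, v) ∈ R then 1 else 0

/-- The diagonal idempotent `I_X` of a subset `X ⊆ V`. -/
noncomputable def idMat [Fintype V] (X : Set V) : Matrix V V ℂ :=
  fun u v => if u = v ∧ u ∈ X then 1 else 0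

/-- The adjacency algebra `𝒜(𝒞)`, the subalgebra of `Mat_V(ℂ)` spanned by the
adjacency matrices of the basis relations. -/
noncomputable def adjAlg [Fintype V] [DecidableEq V] (ℛ : Set (Set (V × V))) :
    Subalgebra ℂ (Matrix V V ℂ) :=
  Algebra.adjoin ℂ (adjMat '' ℛ)

/-- `P` is a central primitive idempotent of the (multiplicatively closed) set of
matrices `S`: `P ∈ S` is a nonzero idempotent commuting with everything in `S`, which is
not the sum of two nonzero orthogonal central idempotents of `S`. -/
def IsCPIin [Fintype V] (S : Set (Matrix V V ℂ)) (P : Matrix V V ℂ) : Prop :=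
  P ∈ S ∧ P ≠ 0 ∧ P * P = P ∧ (∀ Q ∈ S, P * Q = Q * P) ∧
  ∀ Q₁ Q₂ : Matrix V V ℂ, Q₁ ∈ S → Q₂ ∈ S →
    Q₁ * Q₁ = Q₁ → Q₂ * Q₂ = Q₂ →
    (∀ M ∈ S, Q₁ * M = M * Q₁) → (∀ M ∈ S, Q₂ * M = M * Q₂) →
    Q₁ * Q₂ = 0 → Q₂ * Q₁ = 0 → P = Q₁ + Q₂ → Q₁ = 0 ∨ Q₂ = 0

/-- `𝒫(𝒞)`: the set of central primitive idempotents of the adjacency algebra. -/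
def CPIs [Fintype V] [DecidableEq V] (ℛ : Set (Set (V × V))) : Set (Matrix V V ℂ) :=
  {P | IsCPIin (adjAlg ℛ : Set (Matrix V V ℂ)) P}

/-- The adjacency algebra `I_X · 𝒜(𝒞) · I_X` of the homogeneous component `𝒞_X`,
as a subset of `Mat_V(ℂ)`. -/
def compAlgSet [Fintype V] [DecidableEq V] (ℛ : Set (Set (V × V))) (X : Set V) :
    Set (Matrix V V ℂ) :=
  {M | ∃ N ∈ adjAlg ℛ, M = idMat X * N * idMat X}

/-- `𝒫(𝒞_X)`: the central primitive idempotents of the homogeneous component `𝒞_X`. -/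
def CPIsComp [Fintype V] [DecidableEq V] (ℛ : Set (Set (V × V))) (X : Set V) :
    Set (Matrix V V ℂ) :=
  {P | IsCPIin (compAlgSet ℛ X) P}

/-- The degree `n_P` of a central primitive idempotent `P` of the algebra (given as the
set `S`): the positive integer with `n_P ^ 2 = dim_ℂ (S · P)`. -/
noncomputable def degOf [Fintype V] [DecidableEq V] (S : Set (Matrix V V ℂ))
    (P : Matrix V V ℂ) : ℕ :=
  Nat.sqrt (Module.finrank ℂ
    (Submodule.span ℂ {M : Matrix V V ℂ | ∃ a ∈ S, M = a * P}))



section AuxProof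

variable {V : Type*} [Fintype V]

/-- Out-degree of `R` at a point `x`. -/
private noncomputable def dOut (R : Set (V × V)) (x : V) : ℕ :=
  Nat.card {y : V | (x, y) ∈ R}

/-- In-degree of `R` at a point `y`. -/
private noncomputable def dIn (R : Set (V × V)) (y : V) : ℕ :=
  Nat.card {x : V | (x, y) ∈ R}

private lemma natCard_eq {α : Type*} (s : Set α) (hs : s.Finite) :
    Nat.card s = hs.toFinset.card := by
  rw [Nat.card_coe_set_eq, Set.ncard_eq_toFinset_card _ hs]

private lemma card_pos_of_mem {α : Type*} [Finite α] {s : Set α} {a : α} (ha : a ∈ s) :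
    0 < Nat.card s :=
  have : Nonempty s := ⟨⟨a, ha⟩⟩
  Nat.card_pos

private lemma nonempty_of_card_pos {α : Type*} [Finite α] {s : Set α} (h : 0 < Nat.card s) :
    s.Nonempty := by
  rcases (Nat.card_pos_iff.mp h).1 with ⟨a, ha⟩
  exact ⟨a, ha⟩

/-- Every point of `V` lies in a fiber. -/
private lemma exists_fiber {ℛ : Set (Set (V × V))} (hcc : IsCC ℛ) (v : V) :
    ∃ X : Set V, IsFiber ℛ X ∧ v ∈ X := by
  obtain ⟨h1, h2, h3, h4, h5⟩ := hcc
  obtain ⟨R, ⟨hR, hvR⟩, -⟩ := h2 (v, v)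
  have hdiag : ∀ p ∈ R, p.1 = p.2 := h3 R hR ⟨(v, v), hvR, rfl⟩
  refine ⟨{x | (x, x) ∈ R}, ⟨⟨v, hvR⟩, ?_⟩, hvR⟩
  have hEq : diag {x : V | (x, x) ∈ R} = R := by
    ext ⟨a, b⟩
    constructor
    · rintro ⟨ha, hab⟩
      have hab' : a = b := hab
      subst hab'
      exact ha
    · intro hab
      have hb : a = b := hdiag _ hab
      subst hb
      exact ⟨hab, rfl⟩
  rw [hEq]; exact hR

/-- A basis relation meeting `X × Y` is contained in `X × Y`. -/
private lemma mem_relsBtw {ℛ : Set (Set (V × V))} (hcc : IsCC ℛ) {X Y : Set V}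
    (hX : IsFiber ℛ X) (hY : IsFiber ℛ Y) {R : Set (V × V)} (hR : R ∈ ℛ)
    {x y : V} (hx : x ∈ X) (hy : y ∈ Y) (hxy : (x, y) ∈ R) :
    R ∈ relsBtw ℛ X Y := by
  obtain ⟨h1, h2, h3, h4, h5⟩ := hcc
  refine ⟨hR, ?_⟩
  rintro ⟨u, v⟩ huv
  constructor
  · have e := h5 (diag X) hX.2 R hR R hR (x, y) hxy (u, v) huv
    have pos : 0 < iNum (diag X) R (x, y) :=
      card_pos_of_mem (a := x) (show x ∈ {w : V | (x, w) ∈ diag X ∧ (w, y) ∈ R} from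
        ⟨⟨hx, rfl⟩, hxy⟩)
    rw [e] at pos
    obtain ⟨w, hw1, hw2⟩ := nonempty_of_card_pos pos
    exact hw1.1
  · have e := h5 R hR (diag Y) hY.2 R hR (x, y) hxy (u, v) huv
    have pos : 0 < iNum R (diag Y) (x, y) :=
      card_pos_of_mem (a := y) (show y ∈ {w : V | (x, w) ∈ R ∧ (w, y) ∈ diag Y} from
        ⟨hxy, hy, rfl⟩)
    rw [e] at pos
    obtain ⟨w, hw1, hw2⟩ := nonempty_of_card_pos pos
    have hwv : w = v := hw2.2
    subst hwv
    exact hw2.1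

/-- Out-degrees of a basis relation are constant on a fiber. -/
private lemma dOut_const {ℛ : Set (Set (V × V))} (hcc : IsCC ℛ) {X : Set V}
    (hX : IsFiber ℛ X) {R : Set (V × V)} (hR : R ∈ ℛ) {x1 x2 : V}
    (h1 : x1 ∈ X) (h2 : x2 ∈ X) : dOut R x1 = dOut R x2 := by
  obtain ⟨-, -, -, h4, h5⟩ := hcc
  have key : ∀ x : V, iNum R (transp R) (x, x) = dOut R x := by
    intro x
    unfold iNum dOut
    have : {w : V | (x, w) ∈ R ∧ (w, x) ∈ transp R} = {y : V | (x, y) ∈ R} := by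
      ext w; simp [transp]
    rw [this]
  have e := h5 R hR (transp R) (h4 R hR) (diag X) hX.2 (x1, x1) ⟨h1, rfl⟩ (x2, x2) ⟨h2, rfl⟩
  rw [key x1, key x2] at e
  exact e

/-- In-degrees of a basis relation are constant on a fiber. -/
private lemma dIn_const {ℛ : Set (Set (V × V))} (hcc : IsCC ℛ) {Y : Set V}
    (hY : IsFiber ℛ Y) {R : Set (V × V)} (hR : R ∈ ℛ) {y1 y2 : V}
    (h1 : y1 ∈ Y) (h2 : y2 ∈ Y) : dIn R y1 = dIn R y2 := by
  obtain ⟨-, -, -, h4, h5⟩ := hcc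
  have key : ∀ y : V, iNum (transp R) R (y, y) = dIn R y := by
    intro y
    unfold iNum dIn
    have : {w : V | (y, w) ∈ transp R ∧ (w, y) ∈ R} = {x : V | (x, y) ∈ R} := by
      ext w; simp [transp]
    rw [this]
  have e := h5 (transp R) (h4 R hR) R hR (diag Y) hY.2 (y1, y1) ⟨h1, rfl⟩ (y2, y2) ⟨h2, rfl⟩
  rw [key y1, key y2] at e
  exact e

/-- Double count: `|R| = ∑_{x ∈ X} dOut R x` when `R ⊆ X × Y`. -/
private lemma card_rel_fst {X Y : Set V} {R : Set (V × V)} (hR : R ⊆ X ×ˢ Y) :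
    (Set.toFinite R).toFinset.card = ∑ x ∈ (Set.toFinite X).toFinset, dOut R x := by
  rw [Finset.card_eq_sum_card_fiberwise (f := Prod.fst) (t := (Set.toFinite X).toFinset)
    (fun p hp => by
      rw [Finset.mem_coe, Set.Finite.mem_toFinset] at hp ⊢
      exact (hR hp).1)]
  refine Finset.sum_congr rfl fun x _ => ?_
  rw [dOut, natCard_eq _ (Set.toFinite _)]
  apply Finset.card_bij (fun p _ => p.2)
  · intro p hp
    rw [Finset.mem_filter, Set.Finite.mem_toFinset] at hp
    rw [Set.Finite.mem_toFinset]
    have : ((x, p.2) : V × V) = p := by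
      rw [← hp.2]
    rw [Set.mem_setOf_eq, this]
    exact hp.1
  · intro p hp q hq hpq
    rw [Finset.mem_filter] at hp hq
    exact Prod.ext (hp.2.trans hq.2.symm) hpq
  · intro y hy
    rw [Set.Finite.mem_toFinset] at hy
    refine ⟨(x, y), ?_, rfl⟩
    rw [Finset.mem_filter, Set.Finite.mem_toFinset]
    exact ⟨hy, rfl⟩

/-- Double count: `|R| = ∑_{y ∈ Y} dIn R y` when `R ⊆ X × Y`. -/
private lemma card_rel_snd {X Y : Set V} {R : Set (V × V)} (hR : R ⊆ X ×ˢ Y) :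
    (Set.toFinite R).toFinset.card = ∑ y ∈ (Set.toFinite Y).toFinset, dIn R y := by
  rw [Finset.card_eq_sum_card_fiberwise (f := Prod.snd) (t := (Set.toFinite Y).toFinset)
    (fun p hp => by
      rw [Finset.mem_coe, Set.Finite.mem_toFinset] at hp ⊢
      exact (hR hp).2)]
  refine Finset.sum_congr rfl fun y _ => ?_
  rw [dIn, natCard_eq _ (Set.toFinite _)]
  apply Finset.card_bij (fun p _ => p.1)
  · intro p hp
    rw [Finset.mem_filter, Set.Finite.mem_toFinset] at hp
    rw [Set.Finite.mem_toFinset]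
    have : ((p.1, y) : V × V) = p := by
      rw [← hp.2]
    rw [Set.mem_setOf_eq, this]
    exact hp.1
  · intro p hp q hq hpq
    rw [Finset.mem_filter] at hp hq
    exact Prod.ext hpq (hp.2.trans hq.2.symm)
  · intro x hx
    rw [Set.Finite.mem_toFinset] at hx
    refine ⟨(x, y), ?_, rfl⟩
    rw [Finset.mem_filter, Set.Finite.mem_toFinset]
    exact ⟨hx, rfl⟩

/-- Partition of `Y` by the out-neighborhoods at a fixed `x ∈ X`:
`|Y| = ∑_{R ∈ ℛ_{X,Y}} dOut R x`. -/
private lemma card_Y_eq_sum {ℛ : Set (Set (V × V))} (hcc : IsCC ℛ) {X Y : Set V}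
    (hX : IsFiber ℛ X) (hY : IsFiber ℛ Y) {x : V} (hx : x ∈ X) :
    Nat.card Y = ∑ R ∈ (Set.toFinite (relsBtw ℛ X Y)).toFinset, dOut R x := by
  have h2 := hcc.2.1
  have hun : (Set.toFinite Y).toFinset
      = ((Set.toFinite (relsBtw ℛ X Y)).toFinset).biUnion
          (fun R => (Set.toFinite {y : V | (x, y) ∈ R}).toFinset) := by
    ext y
    rw [Set.Finite.mem_toFinset, Finset.mem_biUnion]
    constructor
    · intro hy
      obtain ⟨R, ⟨hR, hxyR⟩, -⟩ := h2 (x, y)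
      refine ⟨R, ?_, ?_⟩
      · rw [Set.Finite.mem_toFinset]
        exact mem_relsBtw hcc hX hY hR hx hy hxyR
      · rw [Set.Finite.mem_toFinset]; exact hxyR
    · rintro ⟨R, hRmem, hyR⟩
      rw [Set.Finite.mem_toFinset] at hRmem hyR
      exact (hRmem.2 hyR).2
  rw [natCard_eq _ (Set.toFinite Y), hun, Finset.card_biUnion]
  · exact Finset.sum_congr rfl fun R _ => (natCard_eq _ (Set.toFinite _)).symm
  · intro R hR S hS hRS
    rw [Finset.mem_coe, Set.Finite.mem_toFinset] at hR hS
    rw [Function.onFun, Finset.disjoint_left]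
    intro y hyR hyS
    rw [Set.Finite.mem_toFinset] at hyR hyS
    obtain ⟨T, -, huniq⟩ := h2 (x, y)
    exact hRS ((huniq R ⟨hR.1, hyR⟩).trans (huniq S ⟨hS.1, hyS⟩).symm)

end AuxProof

/-- **Theorem (Statement 3).** If `𝒞` is a reduced `(m,n,r)`-scheme with `m < 2r`,
then `n = 1`. -/
theorem reduced_m_lt_two_r
    {V : Type*} [Fintype V] [Nonempty V]
    (ℛ : Set (Set (V × V))) (m n r : ℕ)
    (h : IsMNRScheme ℛ m n r) (hred : IsReduced ℛ) (hm : m < 2 * r) :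
    n = 1 := by
  obtain ⟨hcc, hbal, hsize, hnum⟩ := h
  have hsub : ∀ X Y : Set V, IsFiber ℛ X → IsFiber ℛ Y → X = Y := by
    intro X Y hX hY
    by_contra hneq
    obtain ⟨x, hx⟩ := hX.1
    set F := (Set.toFinite (relsBtw ℛ X Y)).toFinset with hF
    have hcard : F.card = r := by
      rw [← hbal X Y hX hY, natCard_eq _ (Set.toFinite _)]
    have hmpos : 0 < m := by
      rw [← hsize X hX]
      exact card_pos_of_mem hx
    have hd2 : ∀ R ∈ F, 2 ≤ dOut R x := by
      intro R hRF
      rw [hF, Set.Finite.mem_toFinset] at hRF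
      obtain ⟨hR, hRsub⟩ := hRF
      obtain ⟨⟨x0, y0⟩, hp0⟩ := hcc.1 R hR
      have hRne : R.Nonempty := ⟨(x0, y0), hp0⟩
      have hx0 : x0 ∈ X := (hRsub hp0).1
      have hpos : 0 < dOut R x := by
        rw [dOut_const hcc hX hR hx hx0]
        exact card_pos_of_mem (a := y0) hp0
      by_contra hlt
      push_neg at hlt
      have hone : dOut R x = 1 := by omega
      -- all out-degrees are 1
      have hall1 : ∀ u ∈ X, dOut R u = 1 := fun u hu =>
        (dOut_const hcc hX hR hu hx).trans hone
      -- double count to get constant in-degree 1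
      obtain ⟨y1, hy1⟩ := hY.1
      have hcount1 : (Set.toFinite R).toFinset.card = m := by
        rw [card_rel_fst hRsub]
        rw [Finset.sum_congr rfl (fun u hu => hall1 u ((Set.toFinite X).mem_toFinset.mp hu))]
        rw [Finset.sum_const, smul_eq_mul, mul_one, ← natCard_eq _ (Set.toFinite X),
          hsize X hX]
      have hcount2 : (Set.toFinite R).toFinset.card = m * dIn R y1 := by
        rw [card_rel_snd hRsub]
        rw [Finset.sum_congr rfl (fun v hv =>
          dIn_const hcc hY hR ((Set.toFinite Y).mem_toFinset.mp hv) hy1)]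
        rw [Finset.sum_const, smul_eq_mul, ← natCard_eq _ (Set.toFinite Y), hsize Y hY]
      have hin1 : dIn R y1 = 1 := by
        have := hcount1 ▸ hcount2
        rcases Nat.eq_zero_or_pos (dIn R y1) with h0 | h1
        · rw [h0, mul_zero] at this; omega
        · nlinarith
      -- R is thin, contradicting reducedness
      apply hred X Y hX hY hneq R ⟨hR, hRsub⟩
      constructor
      · have hc : R.Nonempty := hRne
        rw [outDeg, dif_pos hc]
        have hcX : hc.choose.1 ∈ X := (hRsub hc.choose_spec).1
        exact hall1 _ hcX
      · have hc : R.Nonempty := hRne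
        rw [inDeg, dif_pos hc]
        have hcY : hc.choose.2 ∈ Y := (hRsub hc.choose_spec).2
        exact (dIn_const hcc hY hR hcY hy1).trans hin1
    have hsum : Nat.card Y = ∑ R ∈ F, dOut R x := card_Y_eq_sum hcc hX hY hx
    have hge : 2 * r ≤ m := by
      have h1 : ∑ R ∈ F, 2 ≤ ∑ R ∈ F, dOut R x := Finset.sum_le_sum hd2
      rw [Finset.sum_const, smul_eq_mul, hcard] at h1
      rw [← hsize Y hY, hsum]
      omega
    omega
  rw [← hnum, Nat.card_eq_one_iff_unique]
  obtain ⟨X0, hX0, -⟩ := exists_fiber hcc (Classical.arbitrary V)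
  exact ⟨⟨fun A B => Subtype.ext (hsub A B A.2 B.2)⟩, ⟨⟨X0, hX0⟩⟩⟩

end CCPaper
end

section
/- Let 𝒞 = (V,ℛ) be a coherent configuration, X,Y fibers of 𝒞, S ∈ ℛ_{X,Y}, and L_S := {R ∈ ℛ_X : RS = {S}} (complex product). Then d_{L_S} := Σ_{R ∈ L_S} d_R divides gcd(|X|, e_S). -/
open scoped Classical

namespace CCPaper

variable {V : Type*}

section AuxCC

variable [Fintype V]

lemma natcard_filter (p : V → Prop) :
    Nat.card {y | p y} = (Finset.univ.filter p).card := by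
  rw [Nat.card_eq_fintype_card, Fintype.card_subtype]; rfl

lemma pair_unique {ℛ : Set (Set (V × V))} (hCC : IsCC ℛ)
    {R R' : Set (V × V)} (hR : R ∈ ℛ) (hR' : R' ∈ ℛ) {p : V × V}
    (h1 : p ∈ R) (h2 : p ∈ R') : R = R' := by
  obtain ⟨Q, _, hu⟩ := hCC.2.1 p
  rw [hu R ⟨hR, h1⟩, hu R' ⟨hR', h2⟩]

lemma iNum_pos {R S : Set (V × V)} {p : V × V} {w : V}
    (h1 : (p.1, w) ∈ R) (h2 : (w, p.2) ∈ S) : 0 < iNum R S p := by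
  have hne : Nonempty {w : V | (p.1, w) ∈ R ∧ (w, p.2) ∈ S} := ⟨⟨w, h1, h2⟩⟩
  exact Nat.card_pos

lemma exists_of_iNum_pos {R S : Set (V × V)} {p : V × V}
    (h : 0 < iNum R S p) : ∃ w, (p.1, w) ∈ R ∧ (w, p.2) ∈ S := by
  rw [iNum, Nat.card_pos_iff] at h
  obtain ⟨⟨w, hw⟩⟩ := h.1
  exact ⟨w, hw⟩

/-- every relation containing a pair of `X × Y` (fibers) lies in `X ×ˢ Y`. -/
lemma rel_sub {ℛ : Set (Set (V × V))} (hCC : IsCC ℛ)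
    {X Y : Set V} (hX : IsFiber ℛ X) (hY : IsFiber ℛ Y)
    {R : Set (V × V)} (hR : R ∈ ℛ) {u v : V} (huv : (u, v) ∈ R)
    (hu : u ∈ X) (hv : v ∈ Y) : R ⊆ X ×ˢ Y := by
  rintro ⟨a, b⟩ hab
  have C4 := hCC.2.2.2.2
  constructor
  · have h1 : iNum (diag X) R (a, b) = iNum (diag X) R (u, v) :=
      C4 (diag X) hX.2 R hR R hR (a, b) hab (u, v) huv
    have h2 : 0 < iNum (diag X) R (u, v) := iNum_pos (w := u) ⟨hu, rfl⟩ huv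
    obtain ⟨w, hw1, _⟩ := exists_of_iNum_pos (h1 ▸ h2)
    exact hw1.1
  · have h1 : iNum R (diag Y) (a, b) = iNum R (diag Y) (u, v) :=
      C4 R hR (diag Y) hY.2 R hR (a, b) hab (u, v) huv
    have h2 : 0 < iNum R (diag Y) (u, v) := iNum_pos (w := v) huv ⟨hv, rfl⟩
    obtain ⟨w, hw1, hw2⟩ := exists_of_iNum_pos (h1 ▸ h2)
    exact hw2.2 ▸ hw2.1

lemma outCard_const {ℛ : Set (Set (V × V))} (hCC : IsCC ℛ)
    {X : Set V} (hX : IsFiber ℛ X) {R : Set (V × V)} (hR : R ∈ ℛ)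
    (hsub : ∀ p ∈ R, (p : V × V).1 ∈ X) {u v : V} (hu : u ∈ X) (hv : v ∈ X) :
    Nat.card {y | (u, y) ∈ R} = Nat.card {y | (v, y) ∈ R} := by
  have key : ∀ w : V, iNum R (transp R) (w, w) = Nat.card {y | (w, y) ∈ R} := by
    intro w
    unfold iNum
    have : {w' : V | (w, w') ∈ R ∧ (w', w) ∈ transp R} = {y | (w, y) ∈ R} := by
      ext y
      simp only [Set.mem_setOf_eq, transp, Set.mem_preimage, Prod.swap_prod_mk]
      tauto
    rw [this]
  rw [← key u, ← key v]
  exact hCC.2.2.2.2 R hR (transp R) (hCC.2.2.2.1 R hR) (diag X) hX.2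
    (u, u) ⟨hu, rfl⟩ (v, v) ⟨hv, rfl⟩

lemma outDeg_eq {ℛ : Set (Set (V × V))} (hCC : IsCC ℛ)
    {X : Set V} (hX : IsFiber ℛ X) {R : Set (V × V)} (hR : R ∈ ℛ)
    (hsub : ∀ p ∈ R, (p : V × V).1 ∈ X) {x : V} (hx : x ∈ X) :
    outDeg R = Nat.card {y | (x, y) ∈ R} := by
  have hne : R.Nonempty := hCC.1 R hR
  rw [outDeg, dif_pos hne]
  exact outCard_const hCC hX hR hsub (hsub _ hne.choose_spec) hx

lemma exists_out {ℛ : Set (Set (V × V))} (hCC : IsCC ℛ)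
    {X : Set V} (hX : IsFiber ℛ X) {R : Set (V × V)} (hR : R ∈ ℛ)
    (hsub : ∀ p ∈ R, (p : V × V).1 ∈ X) {x : V} (hx : x ∈ X) :
    ∃ y, (x, y) ∈ R := by
  have hne : R.Nonempty := hCC.1 R hR
  have h1 : 0 < Nat.card {y | (hne.choose.1, y) ∈ R} := by
    have : Nonempty {y | (hne.choose.1, y) ∈ R} := ⟨⟨hne.choose.2, hne.choose_spec⟩⟩
    exact Nat.card_pos
  rw [outCard_const hCC hX hR hsub (hsub _ hne.choose_spec) hx] at h1
  rw [Nat.card_pos_iff] at h1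
  obtain ⟨⟨y, hy⟩⟩ := h1.1
  exact ⟨y, hy⟩

lemma sConst_eq_iNum {ℛ : Set (Set (V × V))} (hCC : IsCC ℛ)
    {R S T : Set (V × V)} (hR : R ∈ ℛ) (hS : S ∈ ℛ) (hT : T ∈ ℛ)
    {p : V × V} (hp : p ∈ T) : sConst R S T = iNum R S p := by
  have hne : T.Nonempty := ⟨p, hp⟩
  rw [sConst, dif_pos hne]
  exact hCC.2.2.2.2 R hR S hS T hT _ hne.choose_spec p hp

end AuxCC

section AuxCC2

variable [Fintype V]

set_option linter.unusedSectionVars false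
set_option linter.unusedVariables false

/-- Characterization of `RS = {S}` for `R ⊆ X × X`. -/
lemma cProd_char {ℛ : Set (Set (V × V))} (hCC : IsCC ℛ)
    {X : Set V} (hX : IsFiber ℛ X)
    {S : Set (V × V)} (hS : S ∈ ℛ) (hSX : ∀ p ∈ S, (p : V × V).1 ∈ X)
    {R : Set (V × V)} (hR : R ∈ ℛ) (hRsub : R ⊆ X ×ˢ X) :
    cProd ℛ R S = {S} ↔
      ∀ u v : V, (u, v) ∈ R → {y | (u, y) ∈ S} = {y | (v, y) ∈ S} := by
  constructor
  · intro h u v huv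
    have hsubset : {y | (v, y) ∈ S} ⊆ {y | (u, y) ∈ S} := by
      intro y hy
      obtain ⟨T, ⟨hT, hpT⟩, _⟩ := hCC.2.1 (u, y)
      have hpos : 0 < sConst R S T := by
        rw [sConst_eq_iNum hCC hR hS hT hpT]
        exact iNum_pos (w := v) huv hy
      have : T ∈ cProd ℛ R S := ⟨hT, hpos⟩
      rw [h] at this
      rw [Set.mem_singleton_iff] at this
      exact this ▸ hpT
    have hmem := hRsub huv
    have hcard : Nat.card {y | (u, y) ∈ S} = Nat.card {y | (v, y) ∈ S} :=
      outCard_const hCC hX hS hSX hmem.1 hmem.2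
    refine (Set.eq_of_subset_of_ncard_le hsubset ?_ (Set.toFinite _)).symm
    rw [← Nat.card_coe_set_eq, ← Nat.card_coe_set_eq, hcard]
  · intro h
    ext T
    simp only [Set.mem_singleton_iff]
    constructor
    · rintro ⟨hT, hpos⟩
      have hne : T.Nonempty := hCC.1 T hT
      rw [sConst, dif_pos hne] at hpos
      obtain ⟨w, hw1, hw2⟩ := exists_of_iNum_pos hpos
      have hmem : hne.choose ∈ S := by
        have hs := h _ _ hw1
        have h2 : hne.choose.2 ∈ {y | (w, y) ∈ S} := hw2
        rw [← hs] at h2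
        exact h2
      exact pair_unique hCC hT hS hne.choose_spec hmem
    · intro hTS
      rw [hTS]
      refine ⟨hS, ?_⟩
      have hne : S.Nonempty := hCC.1 S hS
      rw [sConst, dif_pos hne]
      have hx : hne.choose.1 ∈ X := hSX _ hne.choose_spec
      obtain ⟨w, hw⟩ := exists_out hCC hX hR (fun p hp => (hRsub hp).1) hx
      have hset := h _ _ hw
      have hw2 : (w, hne.choose.2) ∈ S := by
        have : hne.choose.2 ∈ {y | (hne.choose.1, y) ∈ S} := hne.choose_spec
        rw [hset] at this
        exact this
      exact iNum_pos hw hw2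

/-- Generic partition divisibility. -/
lemma card_dvd_of_classes (Xf : Finset V) (g : V → Finset V) (d : ℕ)
    (h1 : ∀ x ∈ Xf, x ∈ g x) (h2 : ∀ x ∈ Xf, g x ⊆ Xf)
    (h3 : ∀ x ∈ Xf, ∀ x' ∈ g x, g x' = g x)
    (h4 : ∀ x ∈ Xf, (g x).card = d) : d ∣ Xf.card := by
  classical
  set T := Xf.image g with hT
  have hXf : Xf = T.biUnion (fun t => t) := by
    ext y
    simp only [Finset.mem_biUnion, hT, Finset.mem_image]
    constructor
    · intro hy; exact ⟨g y, ⟨y, hy, rfl⟩, h1 y hy⟩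
    · rintro ⟨t, ⟨x, hx, rfl⟩, hy⟩; exact h2 x hx hy
  have hdisj : ∀ t₁ ∈ T, ∀ t₂ ∈ T, t₁ ≠ t₂ → Disjoint t₁ t₂ := by
    rintro t₁ ht₁ t₂ ht₂ hne
    obtain ⟨x₁, hx₁, rfl⟩ := Finset.mem_image.1 ht₁
    obtain ⟨x₂, hx₂, rfl⟩ := Finset.mem_image.1 ht₂
    rw [Finset.disjoint_left]
    intro z hz₁ hz₂
    exact hne ((h3 x₁ hx₁ z hz₁).symm.trans (h3 x₂ hx₂ z hz₂))
  rw [hXf, Finset.card_biUnion hdisj]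
  have : ∀ t ∈ T, (t : Finset V).card = d := by
    rintro t ht
    obtain ⟨x, hx, rfl⟩ := Finset.mem_image.1 ht
    exact h4 x hx
  rw [Finset.sum_congr rfl this, Finset.sum_const, smul_eq_mul]
  exact Dvd.intro_left _ rfl

end AuxCC2

set_option linter.unusedSectionVars false in
set_option maxHeartbeats 1000000 in
/-- **Theorem (Statement 10).** For `S ∈ ℛ_{X,Y}` and
`L_S = {R ∈ ℛ_X : RS = {S}}`, the number `d_{L_S} = Σ_{R ∈ L_S} d_R` divides
`gcd(|X|, e_S)`. -/
theorem dLS_dvd_gcd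
    {V : Type*} [Fintype V] [Nonempty V]
    (ℛ : Set (Set (V × V))) (hCC : IsCC ℛ)
    (X Y : Set V) (hX : IsFiber ℛ X) (hY : IsFiber ℛ Y)
    (S : Set (V × V)) (hS : S ∈ relsBtw ℛ X Y) :
    (∑ᶠ R ∈ {R : Set (V × V) | R ∈ relsBtw ℛ X X ∧ cProd ℛ R S = {S}}, outDeg R) ∣
      Nat.gcd (Nat.card X) (inDeg S) := by
  set L : Set (Set (V × V)) := {R : Set (V × V) | R ∈ relsBtw ℛ X X ∧ cProd ℛ R S = {S}}
    with hL
  obtain ⟨hSmem, hSsub⟩ := hS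
  have hSX : ∀ p ∈ S, (p : V × V).1 ∈ X := fun p hp => (hSsub hp).1
  have hmemL : ∀ R ∈ L, R ∈ ℛ := fun R hR => hR.1.1
  have hsubL : ∀ R ∈ L, R ⊆ X ×ˢ X := fun R hR => hR.1.2
  have hchar : ∀ R ∈ L, ∀ u v : V, (u, v) ∈ R →
      {y | (u, y) ∈ S} = {y | (v, y) ∈ S} := by
    intro R hR u v huv
    exact (cProd_char hCC hX hSmem hSX (hmemL R hR) (hsubL R hR)).mp hR.2 u v huv
  -- `Δ_X ∈ L`
  have hdiag_sub : diag X ⊆ X ×ˢ X := by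
    rintro ⟨a, b⟩ ⟨ha, hab⟩
    exact ⟨ha, hab ▸ ha⟩
  have hdiagL : diag X ∈ L := by
    refine ⟨⟨hX.2, hdiag_sub⟩, (cProd_char hCC hX hSmem hSX hX.2 hdiag_sub).mpr ?_⟩
    rintro u v ⟨hu, h⟩
    cases h
    rfl
  -- `L` is closed under transposition
  have htranspL : ∀ R ∈ L, transp R ∈ L := by
    intro R hR
    have hmem : transp R ∈ ℛ := hCC.2.2.2.1 R (hmemL R hR)
    have hsub : transp R ⊆ X ×ˢ X := by
      rintro ⟨a, b⟩ hab
      have h2 := hsubL R hR hab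
      exact ⟨h2.2, h2.1⟩
    refine ⟨⟨hmem, hsub⟩, (cProd_char hCC hX hSmem hSX hmem hsub).mpr ?_⟩
    intro u v huv
    exact (hchar R hR v u huv).symm
  -- the `L`-classes
  set c : V → Set V := fun x => {x' | ∃ R ∈ L, (x, x') ∈ R} with hc
  have hrefl : ∀ x ∈ X, x ∈ c x := fun x hx => ⟨diag X, hdiagL, ⟨hx, rfl⟩⟩
  have hcsub : ∀ x, c x ⊆ X := by
    rintro x x' ⟨R, hR, hxx'⟩
    exact (hsubL R hR hxx').2
  have hsout : ∀ x x', x' ∈ c x → {y | (x, y) ∈ S} = {y | (x', y) ∈ S} := by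
    rintro x x' ⟨R, hR, hxx'⟩
    exact hchar R hR x x' hxx'
  have hsymm : ∀ x x', x' ∈ c x → x ∈ c x' := by
    rintro x x' ⟨R, hR, hxx'⟩
    exact ⟨transp R, htranspL R hR, hxx'⟩
  have htrans : ∀ x x' x'', x' ∈ c x → x'' ∈ c x' → x'' ∈ c x := by
    rintro x x' x'' ⟨R1, hR1, h1⟩ ⟨R2, hR2, h2⟩
    obtain ⟨T, ⟨hT, hpT⟩, -⟩ := hCC.2.1 (x, x'')
    have hxX : x ∈ X := (hsubL R1 hR1 h1).1
    have hx''X : x'' ∈ X := (hsubL R2 hR2 h2).2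
    have hTsub : T ⊆ X ×ˢ X := rel_sub hCC hX hX hT hpT hxX hx''X
    refine ⟨T, ⟨⟨hT, hTsub⟩, (cProd_char hCC hX hSmem hSX hT hTsub).mpr ?_⟩, hpT⟩
    intro u v huv
    have heq : iNum R1 R2 (u, v) = iNum R1 R2 (x, x'') :=
      hCC.2.2.2.2 R1 (hmemL R1 hR1) R2 (hmemL R2 hR2) T hT (u, v) huv (x, x'') hpT
    have hpos : 0 < iNum R1 R2 (x, x'') := iNum_pos (w := x') h1 h2
    obtain ⟨w, hw1, hw2⟩ := exists_of_iNum_pos (heq ▸ hpos)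
    exact (hchar R1 hR1 u w hw1).trans (hchar R2 hR2 w v hw2)
  have hclass : ∀ x ∈ X, ∀ x' ∈ c x, c x' = c x := by
    intro x hx x' hx'
    ext z
    exact ⟨fun hz => htrans x x' z hx' hz, fun hz => htrans x' x z (hsymm x x' hx') hz⟩
  -- counting
  have hLfin : L.Finite := Set.toFinite L
  set Lf : Finset (Set (V × V)) := hLfin.toFinset with hLfEq
  set d : ℕ := ∑ R ∈ Lf, outDeg R with hd
  have hsum : ∑ᶠ R ∈ L, outDeg R = d := by
    rw [hd, ← finsum_mem_coe_finset, hLfEq, hLfin.coe_toFinset]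
  set cf : V → Finset V :=
    fun x => Lf.biUnion (fun R => Finset.univ.filter (fun y => (x, y) ∈ R)) with hcf
  have hcf_mem : ∀ x x', x' ∈ cf x ↔ x' ∈ c x := by
    intro x x'
    simp only [hcf, Finset.mem_biUnion, Finset.mem_filter, Finset.mem_univ, true_and,
      hLfEq, hLfin.mem_toFinset, hc, Set.mem_setOf_eq]
  have hcf_card : ∀ x ∈ X, (cf x).card = d := by
    intro x hx
    rw [hcf]
    rw [Finset.card_biUnion]
    · rw [hd]
      apply Finset.sum_congr rfl
      intro R hR
      rw [hLfEq, hLfin.mem_toFinset] at hR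
      rw [← natcard_filter]
      exact (outDeg_eq hCC hX (hmemL R hR) (fun p hp => (hsubL R hR hp).1) hx).symm
    · intro R hR R' hR' hne
      rw [hLfEq, Finset.mem_coe, hLfin.mem_toFinset] at hR hR'
      rw [Function.onFun, Finset.disjoint_left]
      intro y hy hy'
      rw [Finset.mem_filter] at hy hy'
      exact hne (pair_unique hCC (hmemL R hR) (hmemL R' hR') hy.2 hy'.2)
  -- divisibility into |X|
  set Xf : Finset V := Finset.univ.filter (· ∈ X) with hXfEq
  have hXcard : Nat.card X = Xf.card := by
    rw [hXfEq, ← natcard_filter (fun y => y ∈ X), Set.setOf_mem_eq]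
  have hdvdX : d ∣ Xf.card := by
    apply card_dvd_of_classes Xf cf d
    · intro x hx
      rw [hXfEq, Finset.mem_filter] at hx
      exact (hcf_mem x x).mpr (hrefl x hx.2)
    · intro x hx x' hx'
      rw [hXfEq, Finset.mem_filter]
      exact ⟨Finset.mem_univ _, hcsub x ((hcf_mem x x').mp hx')⟩
    · intro x hx x' hx'
      rw [hXfEq, Finset.mem_filter] at hx
      have hcc := hclass x hx.2 x' ((hcf_mem x x').mp hx')
      ext z
      rw [hcf_mem, hcf_mem, hcc]
    · intro x hx
      rw [hXfEq, Finset.mem_filter] at hx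
      exact hcf_card x hx.2
  -- divisibility into e_S
  have hSne : S.Nonempty := hCC.1 S hSmem
  set y0 : V := hSne.choose.2 with hy0
  have hinDeg : inDeg S = Nat.card {x | (x, y0) ∈ S} := by
    rw [inDeg, dif_pos hSne]
  set Wf : Finset V := Finset.univ.filter (fun x => (x, y0) ∈ S) with hWfEq
  have hWcard : inDeg S = Wf.card := by rw [hinDeg, natcard_filter, hWfEq]
  have hWmemX : ∀ x ∈ Wf, x ∈ X := by
    intro x hx
    rw [hWfEq, Finset.mem_filter] at hx
    exact (hSsub hx.2).1
  have hdvdW : d ∣ Wf.card := by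
    apply card_dvd_of_classes Wf cf d
    · intro x hx
      exact (hcf_mem x x).mpr (hrefl x (hWmemX x hx))
    · intro x hx x' hx'
      have hx'c := (hcf_mem x x').mp hx'
      rw [hWfEq, Finset.mem_filter] at hx ⊢
      refine ⟨Finset.mem_univ _, ?_⟩
      have hy : y0 ∈ {y | (x, y) ∈ S} := hx.2
      rw [hsout x x' hx'c] at hy
      exact hy
    · intro x hx x' hx'
      have hcc := hclass x (hWmemX x hx) x' ((hcf_mem x x').mp hx')
      ext z
      rw [hcf_mem, hcf_mem, hcc]
    · intro x hx
      exact hcf_card x (hWmemX x hx)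
  rw [hsum, hXcard, hWcard]
  exact Nat.dvd_gcd hdvdX hdvdW
end CCPaper
end
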